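/- If G is the disjoint union of graphs G₁ and G₂, then F(G) ≥ F(G₁) · F(G₂): given a pairwise G₁-different family of permutations of V(G₁) and a pairwise G₂-different family of permutations of V(G₂), all concatenations π·σ form a pairwise G-different family of permutations of V(G). -/

import Mathlib

def listDiff {V : Type*} {m : ℕ} (G : SimpleGraph V) (f g : Fin m → V) : Prop :=
  ∃ i, G.Adj (f i) (g i)

/-- The disjoint union of two graphs. -/
def sumGraph {α β : Type*} (G₁ : SimpleGraph α) (G₂ : SimpleGraph β) :
    SimpleGraph (α ⊕ β) where
  Adj x y :=
    match x, y with
    | .inl a, .inl b => G₁.Adj a b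
    | .inr a, .inr b => G₂.Adj a b
    | _, _ => False
  symm := by
    constructor
    intro x y h
    cases x <;> cases y <;> simp_all <;> exact h.symm
  loopless := by
    constructor
    intro x h
    cases x <;> simp_all

lemma append_eq_sumMap {m k : ℕ} (f : Fin m → Fin m) (g : Fin k → Fin k) :
    (Fin.append (Sum.inl ∘ f) (Sum.inr ∘ g) : Fin (m + k) → Fin m ⊕ Fin k) =
      Sum.map f g ∘ finSumFinEquiv.symm := by
  funext i
  refine Fin.addCases (fun i => ?_) (fun i => ?_) i <;>
    simp [Fin.append_left, Fin.append_right]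

lemma append_inj {m k : ℕ} {f₁ f₂ : Fin m → Fin m} {g₁ g₂ : Fin k → Fin k}
    (h : (Fin.append (Sum.inl ∘ f₁) (Sum.inr ∘ g₁) : Fin (m + k) → Fin m ⊕ Fin k) =
      Fin.append (Sum.inl ∘ f₂) (Sum.inr ∘ g₂)) : f₁ = f₂ ∧ g₁ = g₂ := by
  constructor
  · funext i
    have := congrFun h (Fin.castAdd k i)
    simpa [Fin.append_left] using this
  · funext i
    have := congrFun h (Fin.natAdd m i)
    simpa [Fin.append_right] using this

theorem stmt8 (m k : ℕ) (G₁ : SimpleGraph (Fin m)) (G₂ : SimpleGraph (Fin k))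
    (S₁ : Finset (Fin m → Fin m)) (S₂ : Finset (Fin k → Fin k))
    (hS₁ : ∀ f ∈ S₁, Function.Bijective f)
    (hS₂ : ∀ f ∈ S₂, Function.Bijective f)
    (hd₁ : (S₁ : Set (Fin m → Fin m)).Pairwise (listDiff G₁))
    (hd₂ : (S₂ : Set (Fin k → Fin k)).Pairwise (listDiff G₂)) :
    ((S₁ ×ˢ S₂).image fun p =>
        (Fin.append (Sum.inl ∘ p.1) (Sum.inr ∘ p.2) : Fin (m + k) → Fin m ⊕ Fin k)).card =
      S₁.card * S₂.card ∧
    (∀ h ∈ (S₁ ×ˢ S₂).image fun p =>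
        (Fin.append (Sum.inl ∘ p.1) (Sum.inr ∘ p.2) : Fin (m + k) → Fin m ⊕ Fin k),
      Function.Bijective h) ∧
    (((S₁ ×ˢ S₂).image fun p =>
        (Fin.append (Sum.inl ∘ p.1) (Sum.inr ∘ p.2) : Fin (m + k) → Fin m ⊕ Fin k) :
        Finset (Fin (m + k) → Fin m ⊕ Fin k)) :
      Set (Fin (m + k) → Fin m ⊕ Fin k)).Pairwise (listDiff (sumGraph G₁ G₂)) := by
  refine ⟨?_, ?_, ?_⟩
  · rw [Finset.card_image_of_injOn, Finset.card_product]
    intro p _ q _ h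
    obtain ⟨h1, h2⟩ := append_inj h
    exact Prod.ext h1 h2
  · rintro h hh
    simp only [Finset.mem_image, Finset.mem_product] at hh
    obtain ⟨⟨f, g⟩, ⟨hf, hg⟩, rfl⟩ := hh
    rw [append_eq_sumMap]
    exact ((hS₁ f hf).sumMap (hS₂ g hg)).comp finSumFinEquiv.symm.bijective
  · rintro h₁ hh₁ h₂ hh₂ hne
    simp only [Finset.coe_image, Set.mem_image, Finset.mem_coe, Finset.mem_product] at hh₁ hh₂
    obtain ⟨⟨f₁, g₁⟩, ⟨hf₁, hg₁⟩, rfl⟩ := hh₁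
    obtain ⟨⟨f₂, g₂⟩, ⟨hf₂, hg₂⟩, rfl⟩ := hh₂
    by_cases hf : f₁ = f₂
    · have hg : g₁ ≠ g₂ := by
        intro hg; apply hne; rw [hf, hg]
      obtain ⟨i, hi⟩ := hd₂ hg₁ hg₂ hg
      refine ⟨Fin.natAdd m i, ?_⟩
      simpa [Fin.append_right, sumGraph] using hi
    · obtain ⟨i, hi⟩ := hd₁ hf₁ hf₂ hf
      refine ⟨Fin.castAdd k i, ?_⟩
      simpa [Fin.append_left, sumGraph] using hi
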